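/- Multiplication is not similar to addition on a perfect rectangle: there do not exist non-empty perfect sets P₀, P₁ ⊆ ℝ and continuous injections φ₀ : P₀ → ℝ, φ₁ : P₁ → ℝ such that x + y = φ₀(x) · φ₁(y) for all x ∈ P₀ and y ∈ P₁. -/
import Mathlib

lemma perfect_two_points {P : Set ℝ} (hP : Perfect P) {x : ℝ} (hx : x ∈ P) :
    ∃ y ∈ P, y ≠ x := by
  have hacc := hP.acc x hx
  rw [accPt_iff_nhds] at hacc
  obtain ⟨y, ⟨_, hyP⟩, hyx⟩ := hacc Set.univ Filter.univ_mem
  exact ⟨y, hyP, hyx⟩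

/-- Multiplication is not similar to addition on a perfect rectangle: there are no
nonempty perfect sets `P₀, P₁ ⊆ ℝ` and continuous injections `φ₀ : P₀ → ℝ`,
`φ₁ : P₁ → ℝ` with `x + y = φ₀ x * φ₁ y` for all `x ∈ P₀` and `y ∈ P₁`. -/
theorem mul_not_similar_to_add_on_perfect_rectangle :
    ¬ ∃ (P₀ P₁ : Set ℝ) (φ₀ φ₁ : ℝ → ℝ),
      Perfect P₀ ∧ P₀.Nonempty ∧ Perfect P₁ ∧ P₁.Nonempty ∧
      ContinuousOn φ₀ P₀ ∧ Set.InjOn φ₀ P₀ ∧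
      ContinuousOn φ₁ P₁ ∧ Set.InjOn φ₁ P₁ ∧
      ∀ x ∈ P₀, ∀ y ∈ P₁, x + y = φ₀ x * φ₁ y := by
  rintro ⟨P₀, P₁, φ₀, φ₁, hP₀, ⟨x₀, hx₀⟩, hP₁, ⟨y₀, hy₀⟩, _, _, _, _, h⟩
  obtain ⟨x₁, hx₁, hx₁x₀⟩ := perfect_two_points hP₀ hx₀
  obtain ⟨y₁, hy₁, hy₁y₀⟩ := perfect_two_points hP₁ hy₀
  have h00 := h x₀ hx₀ y₀ hy₀
  have h01 := h x₀ hx₀ y₁ hy₁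
  have h10 := h x₁ hx₁ y₀ hy₀
  have h11 := h x₁ hx₁ y₁ hy₁
  have key : (x₀ + y₀) * (x₁ + y₁) = (x₀ + y₁) * (x₁ + y₀) := by
    rw [h00, h01, h10, h11]; ring
  have : (x₀ - x₁) * (y₁ - y₀) = 0 := by nlinarith [key]
  rcases mul_eq_zero.mp this with h' | h'
  · exact hx₁x₀ (by linarith)
  · exact hy₁y₀ (by linarith)
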